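/- Let P be a regular poset on [n] and i ∈ [n-1] with i and i+1 incomparable in P. Suppose there exists x ∈ [n], x ∉ {i, i+1}, that is comparable to exactly one of i and i+1 in P. Then the poset s_i · P obtained by swapping labels i and i+1 is not regular. -/
import Mathlib


/-- The adjacent transposition `s_i` of `Fin n` (0-indexed), swapping `i` and `i+1`. -/
def adj (n i : ℕ) (h : i + 1 < n) : Equiv.Perm (Fin n) :=
  Equiv.swap ⟨i, Nat.lt_of_succ_lt h⟩ ⟨i + 1, h⟩

/-- A poset with ground set `Fin n` (`[n]`, 0-indexed). -/
structure FinPoset (n : ℕ) where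
  le : Fin n → Fin n → Prop
  refl : ∀ a, le a a
  trans : ∀ a b c, le a b → le b c → le a c
  antisymm : ∀ a b, le a b → le b a → a = b

/-- `Σ_L(P)`: the permutations `σ` with `σ(i) ≤ σ(j)` whenever `i ≼_P j`. -/
def SigmaL {n : ℕ} (P : FinPoset n) : Set (Equiv.Perm (Fin n)) :=
  {σ | ∀ i j : Fin n, P.le i j → σ i ≤ σ j}

/-- `P` is regular: whenever `x ≼_P z` and `y` lies strictly between `x` and `z` in the
integer order, `x ≼_P y` or `y ≼_P z`. -/
def Regular {n : ℕ} (P : FinPoset n) : Prop :=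
  ∀ x y z : Fin n, P.le x z → ((x < y ∧ y < z) ∨ (z < y ∧ y < x)) →
    P.le x y ∨ P.le y z

/-- The poset `σ · P`, obtained by relabelling: `i ≼ j` iff `σ⁻¹(i) ≼_P σ⁻¹(j)`. -/
def permPoset {n : ℕ} (σ : Equiv.Perm (Fin n)) (P : FinPoset n) : FinPoset n where
  le i j := P.le (σ⁻¹ i) (σ⁻¹ j)
  refl _ := P.refl _
  trans _ _ _ h1 h2 := P.trans _ _ _ h1 h2
  antisymm _ _ h1 h2 := σ⁻¹.injective (P.antisymm _ _ h1 h2)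

/-- `b` covers `a` in `P`. -/
def Covers {n : ℕ} (P : FinPoset n) (a b : Fin n) : Prop :=
  a ≠ b ∧ P.le a b ∧ ¬ ∃ c, c ≠ a ∧ c ≠ b ∧ P.le a c ∧ P.le c b

/-- `a` and `b` are comparable in `P`. -/
def Cmp {n : ℕ} (P : FinPoset n) (a b : Fin n) : Prop :=
  P.le a b ∨ P.le b a

/-- Let `P` be a regular poset on `[n]` with `i` and `i+1` incomparable,
and suppose some `x ∉ {i, i+1}` is comparable to exactly one of `i` and `i+1`.
Then `s_i · P` is not regular. -/
theorem stmt9 (n : ℕ) (P : FinPoset n) (hP : Regular P) (i : ℕ) (h : i + 1 < n)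
    (hinc : ¬ Cmp P ⟨i, Nat.lt_of_succ_lt h⟩ ⟨i + 1, h⟩)
    (x : Fin n) (hx₁ : x ≠ ⟨i, Nat.lt_of_succ_lt h⟩) (hx₂ : x ≠ ⟨i + 1, h⟩)
    (hone : (Cmp P x ⟨i, Nat.lt_of_succ_lt h⟩ ∧ ¬ Cmp P x ⟨i + 1, h⟩) ∨
            (¬ Cmp P x ⟨i, Nat.lt_of_succ_lt h⟩ ∧ Cmp P x ⟨i + 1, h⟩)) :
    ¬ Regular (permPoset (adj n i h) P) := by
  intro hQ
  set a : Fin n := ⟨i, Nat.lt_of_succ_lt h⟩ with ha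
  set b : Fin n := ⟨i + 1, h⟩ with hb
  have hxa : x.val ≠ i := fun hh => hx₁ (Fin.ext hh)
  have hxb : x.val ≠ i + 1 := fun hh => hx₂ (Fin.ext hh)
  have hab : (a : Fin n) < b := by simp [ha, hb, Fin.lt_def]
  have key : ∀ u v, (permPoset (adj n i h) P).le u v ↔ P.le (Equiv.swap a b u) (Equiv.swap a b v) := by
    intro u v
    simp [permPoset, adj, Equiv.swap_inv, ha, hb]
  have sx : Equiv.swap a b x = x := Equiv.swap_apply_of_ne_of_ne hx₁ hx₂
  have sa : Equiv.swap a b a = b := Equiv.swap_apply_left a b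
  have sb : Equiv.swap a b b = a := Equiv.swap_apply_right a b
  have hPab : ¬ P.le a b := fun hh => hinc (Or.inl hh)
  have hPba : ¬ P.le b a := fun hh => hinc (Or.inr hh)
  rcases lt_or_gt_of_ne (show x.val ≠ i from hxa) with hlt | hgt
  · -- x < a < b
    have hxlta : x < a := by simp [Fin.lt_def, ha]; omega
    have hxltb : x < b := by simp [Fin.lt_def, hb]; omega
    -- x must be comparable to a, not b, in P
    have hca : Cmp P x a ∧ ¬ Cmp P x b := by
      rcases hone with h1 | ⟨hna, hcb⟩
      · exact h1
      · exfalso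
        rcases hcb with hxb' | hbx'
        · rcases hP x a b hxb' (Or.inl ⟨hxlta, hab⟩) with h' | h'
          · exact hna (Or.inl h')
          · exact hPab h'
        · rcases hP b a x hbx' (Or.inr ⟨hxlta, hab⟩) with h' | h'
          · exact hPba h'
          · exact hna (Or.inr h')
    rcases hca.1 with hxa' | hax'
    · -- P.le x a, so Q.le x b
      have : (permPoset (adj n i h) P).le x b := by rw [key, sx, sb]; exact hxa'
      rcases hQ x a b this (Or.inl ⟨hxlta, hab⟩) with h' | h'
      · rw [key, sx, sa] at h'; exact hca.2 (Or.inl h')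
      · rw [key, sa, sb] at h'; exact hPba h'
    · -- P.le a x, so Q.le b x
      have : (permPoset (adj n i h) P).le b x := by rw [key, sx, sb]; exact hax'
      rcases hQ b a x this (Or.inr ⟨hxlta, hab⟩) with h' | h'
      · rw [key, sa, sb] at h'; exact hPab h'
      · rw [key, sx, sa] at h'; exact hca.2 (Or.inr h')
  · -- a < b < x
    have hbltx : b < x := by simp [Fin.lt_def, hb]; omega
    have haltx : a < x := by simp [Fin.lt_def, ha]; omega
    have hcb : Cmp P x b ∧ ¬ Cmp P x a := by
      rcases hone with ⟨hca', hnb⟩ | h1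
      · exfalso
        rcases hca' with hxa' | hax'
        · rcases hP x b a hxa' (Or.inr ⟨hab, hbltx⟩) with h' | h'
          · exact hnb (Or.inl h')
          · exact hPba h'
        · rcases hP a b x hax' (Or.inl ⟨hab, hbltx⟩) with h' | h'
          · exact hPab h'
          · exact hnb (Or.inr h')
      · exact ⟨h1.2, h1.1⟩
    rcases hcb.1 with hxb' | hbx'
    · -- P.le x b, so Q.le x a
      have : (permPoset (adj n i h) P).le x a := by rw [key, sx, sa]; exact hxb'
      rcases hQ x b a this (Or.inr ⟨hab, hbltx⟩) with h' | h'
      · rw [key, sx, sb] at h'; exact hcb.2 (Or.inl h')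
      · rw [key, sa, sb] at h'; exact hPab h'
    · -- P.le b x, so Q.le a x
      have : (permPoset (adj n i h) P).le a x := by rw [key, sx, sa]; exact hbx'
      rcases hQ a b x this (Or.inl ⟨hab, hbltx⟩) with h' | h'
      · rw [key, sa, sb] at h'; exact hPba h'
      · rw [key, sx, sb] at h'; exact hcb.2 (Or.inr h')
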